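/- Translation replacement (Proposition 2.3(b)): If Γ satisfies volume control with parameters (α,c_L,c_U), then there exist constants C, b > 0, depending only on α, c_L, c_U, such that for every 0 < κ < 1 and every real R ≥ 1 there exist a natural number J ≤ C·κ^{-α} and J countable coverings 𝒫^{(j)} = {B(z_i^{(j)},R)}_{i≥1} of 𝕍 (j = 1,…,J), each with the property that every vertex belongs to at most b of its balls, such that ⋃_{j=1}^{J} ⋃_{i} B(z_i^{(j)}, κR) = 𝕍. -/

import Mathlib

open scoped BigOperators

namespace LandscapeGraph

variable {V : Type*}

/-- Ball of real radius `r` with respect to the shortest-path graph metric. -/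
def gball (G : SimpleGraph V) (x : V) (r : ℝ) : Set V :=
  {y | G.Reachable x y ∧ (G.dist x y : ℝ) ≤ r}

/-- The degree of a vertex, as a real number. -/
noncomputable def ndeg (G : SimpleGraph V) (x : V) : ℝ := ((G.neighborSet x).ncard : ℝ)

/-- The graph Laplacian `Δf(x) = Σ_{y∼x} (f(y) - f(x))`. -/
noncomputable def lap (G : SimpleGraph V) (f : V → ℝ) (x : V) : ℝ :=
  ∑ᶠ y ∈ G.neighborSet x, (f y - f x)

/-- Volume control (Ahlfors `α`-regularity) with parameters `(α, cL, cU)`. -/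
def VolCtrl (G : SimpleGraph V) (α cL cU : ℝ) : Prop :=
  ∀ x : V, ∀ r : ℝ, 1 ≤ r →
    cL * r ^ α ≤ ((gball G x r).ncard : ℝ) ∧ ((gball G x r).ncard : ℝ) ≤ cU * r ^ α

/-- Degree-weighted average of `f` over a set `S`. -/
noncomputable def wavg (G : SimpleGraph V) (S : Set V) (f : V → ℝ) : ℝ :=
  (∑ᶠ z ∈ S, f z * ndeg G z) / ∑ᶠ z ∈ S, ndeg G z

/-- The Dirichlet-type energy `Σ_{z,w∈S, z∼w} (f z - f w)²` (over ordered pairs). -/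
noncomputable def pairEnergy (G : SimpleGraph V) (S : Set V) (f : V → ℝ) : ℝ :=
  ∑ᶠ z ∈ S, ∑ᶠ w ∈ {w ∈ S | G.Adj z w}, (f z - f w) ^ 2

/-- The weak Poincaré inequality with constants `(CP, lam)`. -/
def WeakPI (G : SimpleGraph V) (CP lam : ℝ) : Prop :=
  ∀ x : V, ∀ r : ℝ, 1 ≤ r → ∀ f : V → ℝ,
    (∑ᶠ z ∈ gball G x r, (f z - wavg G (gball G x r) f) ^ 2) ≤
      CP * r ^ 2 * pairEnergy G (gball G x (lam * r)) f

/-- The Dirichlet restriction `H^A` of the Jacobi operator, acting on functions. -/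
noncomputable def HAop (G : SimpleGraph V) (μ : V → V → ℝ) (Vpot : V → ℝ) (A : Set V)
    (f : V → ℝ) (x : V) : ℝ :=
  ndeg G x * f x - (∑ᶠ y ∈ {y ∈ A | G.Adj x y}, μ x y * f y) + Vpot x * f x

/-- Symmetric bond weights with values in `[0,1]`. -/
def BondWeights (G : SimpleGraph V) (μ : V → V → ℝ) : Prop :=
  ∀ x y, G.Adj x y → μ x y = μ y x ∧ 0 ≤ μ x y ∧ μ x y ≤ 1

/-- `u` is the landscape function of `H^A`: positive on `A` and solving `H^A u = 1` on `A`. -/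
def IsLandscape (G : SimpleGraph V) (μ : V → V → ℝ) (Vpot : V → ℝ) (A : Finset V)
    (u : V → ℝ) : Prop :=
  (∀ x ∈ A, 0 < u x) ∧ ∀ x ∈ A, HAop G μ Vpot (↑A) u x = 1

open Classical in
/-- The Dirichlet restriction `H^A` as a matrix indexed by `A`. -/
noncomputable def HAmat (G : SimpleGraph V) (μ : V → V → ℝ) (Vpot : V → ℝ) (A : Finset V) :
    Matrix A A ℝ := fun x y =>
  (if (x : V) = (y : V) then ndeg G (x : V) + Vpot (x : V) else 0) -
    (if G.Adj (x : V) (y : V) then μ (x : V) (y : V) else 0)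

open Classical in
/-- The integrated density of states: number of eigenvalues `≤ E` (with multiplicity),
divided by `|A|`. -/
noncomputable def NA {A : Finset V} {M : Matrix A A ℝ} (hM : M.IsHermitian) (E : ℝ) : ℝ :=
  ((Finset.univ.filter fun i => hM.eigenvalues i ≤ E).card : ℝ) / (A.card : ℝ)

/-- `Z` is the set of centers of a covering of `𝕍` by balls of radius `R`
with finite overlap constant `b`. -/
def IsCover (G : SimpleGraph V) (Z : Set V) (R b : ℝ) : Prop :=
  (∀ y : V, ∃ z ∈ Z, y ∈ gball G z R) ∧
    ∀ y : V, (({z ∈ Z | y ∈ gball G z R}).ncard : ℝ) ≤ b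

/-- The landscape counting function `N_u^{𝒫,A}(E)` for the cover with centers `Z` and radius `R`:
the number of balls `B` of the cover with `min_{x ∈ B∩A} 1/u(x) ≤ E`, divided by `|A|`. -/
noncomputable def Nu (G : SimpleGraph V) (u : V → ℝ) (A : Finset V) (Z : Set V) (R E : ℝ) : ℝ :=
  (({z ∈ Z | ∃ x ∈ A, x ∈ gball G z R ∧ 1 / u x ≤ E}).ncard : ℝ) / (A.card : ℝ)

/-- The diameter of a finite set of vertices in the graph metric. -/
noncomputable def diamA (G : SimpleGraph V) (A : Finset V) : ℝ :=
  ((A.sup fun x => A.sup fun y => G.dist x y : ℕ) : ℝ)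

/-- `A` has sufficient overlap with balls, with constant `cA`. -/
def SuffOverlap (G : SimpleGraph V) (A : Finset V) (α cA : ℝ) : Prop :=
  ∀ x ∈ A, ∀ r : ℝ, 1 ≤ r → r ≤ 4 * diamA G A →
    cA * r ^ α ≤ (((↑A : Set V) ∩ gball G x r).ncard : ℝ)

/-- The Dirichlet Laplacian `-Δ^B` of a region `B`, acting on functions:
`(-Δ^B f)(x) = deg(x) f(x) - Σ_{y ∈ B, y ∼ x} f(y)`. -/
noncomputable def negDirLap (G : SimpleGraph V) (B : Set V) (f : V → ℝ) (x : V) : ℝ :=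
  ndeg G x * f x - ∑ᶠ y ∈ {y ∈ B | G.Adj x y}, f y

/-- Exterior (vertex) boundary of a set. -/
def extBoundary (G : SimpleGraph V) (S : Set V) : Set V :=
  {x | x ∉ S ∧ ∃ y ∈ S, G.Adj x y}

/-- Ball with respect to an abstract metric `d`. -/
def dball (d : V → V → ℝ) (ξ : V) (R : ℝ) : Set V := {y | d ξ y ≤ R}

/-- The harmonic weight assumption: a metric `d` strongly equivalent (constant `c`) to the
graph metric, together with harmonic weights `h ξ R : B^d(ξ,R) → [0,1]` satisfying the
submean property for subharmonic functions (with equality for harmonic ones), and a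
uniform lower bound `c' / |B^d(ξ,R)|` off `bad' sets `X ξ R` of asymptotically
negligible proportion. -/
structure HarmonicWeight (G : SimpleGraph V) (d : V → V → ℝ) (h : V → ℝ → V → ℝ)
    (X : V → ℝ → Set V) (c c' : ℝ) : Prop where
  c_one : 1 ≤ c
  c'_pos : 0 < c'
  d_self : ∀ x, d x x = 0
  d_eq_zero : ∀ x y, d x y = 0 → x = y
  d_symm : ∀ x y, d x y = d y x
  d_triangle : ∀ x y z, d x z ≤ d x y + d y z
  d_lower : ∀ x y, c⁻¹ * (G.dist x y : ℝ) ≤ d x y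
  d_upper : ∀ x y, d x y ≤ c * (G.dist x y : ℝ)
  h_mem : ∀ ξ (R : ℝ) y, y ∈ dball d ξ R → h ξ R y ∈ Set.Icc (0 : ℝ) 1
  submean : ∀ ξ (R : ℝ), 0 < R → ∀ f : V → ℝ,
    (∀ x ∈ dball d ξ R ∪ extBoundary G (dball d ξ R), 0 ≤ lap G f x) →
    f ξ ≤ ∑ᶠ y ∈ dball d ξ R, h ξ R y * f y
  harm_eq : ∀ ξ (R : ℝ), 0 < R → ∀ f : V → ℝ,
    (∀ x ∈ dball d ξ R ∪ extBoundary G (dball d ξ R), lap G f x = 0) →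
    f ξ = ∑ᶠ y ∈ dball d ξ R, h ξ R y * f y
  X_subset : ∀ ξ (R : ℝ), X ξ R ⊆ dball d ξ R
  h_lower : ∀ ξ (R : ℝ), ∀ y ∈ dball d ξ R \ X ξ R,
    c' / ((dball d ξ R).ncard : ℝ) ≤ h ξ R y
  X_small : ∀ ε : ℝ, 0 < ε → ∃ R₀ : ℝ, ∀ R : ℝ, R₀ ≤ R → ∀ ξ : V,
    ((X ξ R).ncard : ℝ) ≤ ε * ((dball d ξ R).ncard : ℝ)



noncomputable def greedyCol (rel : ℕ → ℕ → Prop) : ℕ → ℕ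
  | n => sInf {c : ℕ | ∀ m, ∀ _ : m < n, rel n m → greedyCol rel m ≠ c}
termination_by n => n
decreasing_by assumption

lemma greedyCol_setNonempty (rel : ℕ → ℕ → Prop) (n : ℕ) :
    {c : ℕ | ∀ m, ∀ _ : m < n, rel n m → greedyCol rel m ≠ c}.Nonempty := by
  obtain ⟨c, hc⟩ := Infinite.exists_notMem_finset ((Finset.range n).image (greedyCol rel))
  exact ⟨c, fun m hm _ hme => hc (Finset.mem_image.2 ⟨m, Finset.mem_range.2 hm, hme⟩)⟩

lemma greedyCol_ne (rel : ℕ → ℕ → Prop) {n m : ℕ} (h : m < n) (hrel : rel n m) :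
    greedyCol rel m ≠ greedyCol rel n := by
  conv_rhs => rw [greedyCol]
  exact Nat.sInf_mem (greedyCol_setNonempty rel n) m h hrel

open Classical in
lemma greedyCol_lt (rel : ℕ → ℕ → Prop) (n K : ℕ)
    (hK : ((Finset.range n).filter (fun m => rel n m)).card < K) :
    greedyCol rel n < K := by
  classical
  set F : Finset ℕ := ((Finset.range n).filter (fun m => rel n m)).image (greedyCol rel) with hF
  have hcard : F.card < (Finset.range K).card := by
    refine lt_of_le_of_lt Finset.card_image_le ?_
    simpa using hK
  have hns : ¬ (Finset.range K ⊆ F) := fun h => absurd (Finset.card_le_card h) (by omega)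
  obtain ⟨c, hcK, hcF⟩ := Finset.not_subset.1 hns
  have hcmem : c ∈ {c : ℕ | ∀ m, ∀ _ : m < n, rel n m → greedyCol rel m ≠ c} := by
    intro m hm hr hme
    exact hcF (Finset.mem_image.2 ⟨m, Finset.mem_filter.2 ⟨Finset.mem_range.2 hm, hr⟩, hme⟩)
  have : greedyCol rel n ≤ c := by rw [greedyCol]; exact Nat.sInf_le hcmem
  exact lt_of_le_of_lt this (Finset.mem_range.1 hcK)

lemma gball_finite {G : SimpleGraph V} {α cL cU : ℝ} (hcL : 0 < cL)
    (hvol : VolCtrl G α cL cU) (x : V) {r : ℝ} (hr : 1 ≤ r) : (gball G x r).Finite := by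
  by_contra h
  have h1 := (hvol x r hr).1
  rw [Set.Infinite.ncard h] at h1
  have h2 : (0:ℝ) < cL * r ^ α := mul_pos hcL (Real.rpow_pos_of_pos (by linarith) α)
  simp only [Nat.cast_zero] at h1
  linarith

lemma exists_max_sep (G : SimpleGraph V) {s : ℝ} (hs : 0 ≤ s) (W : Set V)
    (hW : W.Pairwise fun z z' => s < (G.dist z z' : ℝ)) :
    ∃ Z : Set V, W ⊆ Z ∧ (Z.Pairwise fun z z' => s < (G.dist z z' : ℝ)) ∧
      ∀ y : V, ∃ z ∈ Z, (G.dist z y : ℝ) ≤ s := by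
  have hchainZ : ∀ c ⊆ {T : Set V | T.Pairwise fun z z' => s < (G.dist z z' : ℝ)},
      IsChain (· ⊆ ·) c → c.Nonempty →
      ∃ ub ∈ {T : Set V | T.Pairwise fun z z' => s < (G.dist z z' : ℝ)}, ∀ t ∈ c, t ⊆ ub := by
    intro c hcS hchain hcne
    refine ⟨⋃₀ c, ?_, fun t ht => Set.subset_sUnion_of_mem ht⟩
    intro z hz z' hz' hne
    obtain ⟨a, ha, hza⟩ := hz
    obtain ⟨b, hb, hz'b⟩ := hz'
    rcases eq_or_ne a b with rfl | hab
    · exact hcS ha hza hz'b hne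
    · rcases hchain ha hb hab with hsub | hsub
      · exact hcS hb (hsub hza) hz'b hne
      · exact hcS ha hza (hsub hz'b) hne
  obtain ⟨Z, hWZ, hmax⟩ := zorn_subset_nonempty
    {T : Set V | T.Pairwise fun z z' => s < (G.dist z z' : ℝ)} hchainZ W hW
  refine ⟨Z, hWZ, hmax.prop, ?_⟩
  intro y
  by_contra h
  push_neg at h
  have hyZ : y ∉ Z := fun hy => absurd (h y hy)
    (by rw [not_lt]; simpa [SimpleGraph.dist_self] using hs)
  have hins : (insert y Z).Pairwise fun z z' => s < (G.dist z z' : ℝ) := by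
    rw [Set.pairwise_insert]
    refine ⟨hmax.prop, fun b hb _ => ⟨?_, h b hb⟩⟩
    rw [SimpleGraph.dist_comm]
    exact h b hb
  have hsub : insert y Z ⊆ Z := hmax.2 hins (Set.subset_insert y Z)
  exact hyZ (hsub (Set.mem_insert y Z))

lemma packing {G : SimpleGraph V} (hconn : G.Connected) {α cL cU : ℝ} (hα : 1 ≤ α)
    (hcL : 0 < cL) (hcU : 0 < cU) (hvol : VolCtrl G α cL cU)
    {Z : Set V} {s R : ℝ} (hs : 0 < s) (hsR : s ≤ R) (hR : 1 ≤ R)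
    (hsep : Z.Pairwise fun z z' => s < (G.dist z z' : ℝ)) (x : V) :
    (({z ∈ Z | (G.dist x z : ℝ) ≤ R}).ncard : ℝ) ≤
      (cU/cL * 4 ^ α + cU * 2 ^ α) * (R/s) ^ α := by
  classical
  have hpre := hconn.preconnected
  have hR0 : (0:ℝ) < R := by linarith
  have hα0 : (0:ℝ) ≤ α := by linarith
  set S : Set V := {z ∈ Z | (G.dist x z : ℝ) ≤ R} with hSdef
  have hSsub : S ⊆ gball G x R := fun z hz => ⟨hpre x z, hz.2⟩
  have hSfin : S.Finite := (gball_finite hcL hvol x hR).subset hSsub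
  have hRs0 : (0:ℝ) < R / s := div_pos hR0 hs
  have h1 : (0:ℝ) ≤ cU/cL * 4 ^ α * (R/s) ^ α := by positivity
  have h2 : (0:ℝ) ≤ cU * 2 ^ α * (R/s) ^ α := by positivity
  rw [add_mul]
  rcases lt_or_ge s 2 with hcase | hcase
  · -- small s : crude bound
    have hb1 : (S.ncard : ℝ) ≤ ((gball G x R).ncard : ℝ) := by
      exact_mod_cast Set.ncard_le_ncard hSsub (gball_finite hcL hvol x hR)
    have hb2 := (hvol x R hR).2
    have hb3 : R ^ α ≤ (2 * (R/s)) ^ α := by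
      apply Real.rpow_le_rpow (le_of_lt hR0) _ hα0
      rw [show (2:ℝ)*(R/s) = 2*R/s by ring, le_div_iff₀ hs]
      nlinarith
    have hb4 : (2 * (R/s)) ^ α = 2 ^ α * (R/s) ^ α :=
      Real.mul_rpow (by norm_num) (le_of_lt hRs0)
    have : (S.ncard : ℝ) ≤ cU * 2 ^ α * (R/s) ^ α := by
      calc (S.ncard : ℝ) ≤ cU * R ^ α := le_trans hb1 hb2
        _ ≤ cU * (2 ^ α * (R/s) ^ α) := by rw [← hb4]; exact mul_le_mul_of_nonneg_left hb3 (le_of_lt hcU)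
        _ = cU * 2 ^ α * (R/s) ^ α := by ring
    linarith
  · -- s ≥ 2 : disjoint balls argument
    have hs2 : (1:ℝ) ≤ s/2 := by linarith
    have h2R : (1:ℝ) ≤ 2*R := by linarith
    set T : Finset V := hSfin.toFinset with hT
    set F : V → Finset V := fun z => (gball_finite hcL hvol z hs2).toFinset with hFdef
    have hdisj : ∀ z ∈ T, ∀ z' ∈ T, z ≠ z' → Disjoint (F z) (F z') := by
      intro z hz z' hz' hne
      rw [Finset.disjoint_left]
      intro w hw hw'
      rw [hFdef, Set.Finite.mem_toFinset] at hw hw'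
      have hzZ : z ∈ S := by rwa [hT, Set.Finite.mem_toFinset] at hz
      have hz'Z : z' ∈ S := by rwa [hT, Set.Finite.mem_toFinset] at hz'
      have hsep' : s < (G.dist z z' : ℝ) := hsep hzZ.1 hz'Z.1 hne
      have htri : (G.dist z z' : ℝ) ≤ (G.dist z w : ℝ) + (G.dist w z' : ℝ) := by
        exact_mod_cast hconn.dist_triangle
      have hc : (G.dist w z' : ℝ) = (G.dist z' w : ℝ) := by rw [SimpleGraph.dist_comm]
      have := hw.2
      have := hw'.2
      rw [hc] at htri
      linarith
    have hsub : T.biUnion F ⊆ (gball_finite hcL hvol x h2R).toFinset := by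
      intro w hw
      rw [Finset.mem_biUnion] at hw
      obtain ⟨z, hz, hwz⟩ := hw
      rw [hFdef, Set.Finite.mem_toFinset] at hwz
      rw [hT, Set.Finite.mem_toFinset] at hz
      rw [Set.Finite.mem_toFinset]
      refine ⟨hpre x w, ?_⟩
      have htri : (G.dist x w : ℝ) ≤ (G.dist x z : ℝ) + (G.dist z w : ℝ) := by
        exact_mod_cast hconn.dist_triangle
      have := hz.2
      have := hwz.2
      linarith
    have hcards : ∑ z ∈ T, ((F z).card : ℝ) ≤ cU * (2*R) ^ α := by
      have e1 : ∑ z ∈ T, (F z).card = (T.biUnion F).card := (Finset.card_biUnion hdisj).symm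
      have e2 : (T.biUnion F).card ≤ (gball_finite hcL hvol x h2R).toFinset.card :=
        Finset.card_le_card hsub
      have e3 : ((gball_finite hcL hvol x h2R).toFinset.card : ℝ) ≤ cU * (2*R) ^ α := by
        rw [show (gball_finite hcL hvol x h2R).toFinset.card = (gball G x (2*R)).ncard from
          (Set.ncard_eq_toFinset_card _ _).symm]
        exact (hvol x (2*R) h2R).2
      calc ∑ z ∈ T, ((F z).card : ℝ) = ((∑ z ∈ T, (F z).card : ℕ) : ℝ) := by push_cast; ring
        _ = ((T.biUnion F).card : ℝ) := by rw [e1]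
        _ ≤ cU * (2*R) ^ α := le_trans (by exact_mod_cast e2) e3
    have hlow : ∀ z ∈ T, cL * (s/2) ^ α ≤ ((F z).card : ℝ) := by
      intro z _
      calc cL * (s/2) ^ α ≤ ((gball G z (s/2)).ncard : ℝ) := (hvol z (s/2) hs2).1
        _ = ((F z).card : ℝ) := by
            rw [hFdef]
            exact_mod_cast congrArg Nat.cast (Set.ncard_eq_toFinset_card _ _)
    have hsum : (T.card : ℝ) * (cL * (s/2) ^ α) ≤ cU * (2*R) ^ α := by
      have h := Finset.card_nsmul_le_sum T (fun z => ((F z).card : ℝ)) (cL * (s/2) ^ α) hlow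
      rw [nsmul_eq_mul] at h
      exact le_trans h hcards
    have hpos : (0:ℝ) < cL * (s/2) ^ α := by positivity
    have hkey : (4:ℝ) ^ α * (R/s) ^ α * (s/2) ^ α = (2*R) ^ α := by
      rw [← Real.mul_rpow (by norm_num) (le_of_lt hRs0),
        ← Real.mul_rpow (by positivity) (by linarith)]
      congr 1
      field_simp
      ring
    have hA : cU/cL * 4 ^ α * (R/s) ^ α * (cL * (s/2) ^ α) = cU * (2*R) ^ α := by
      rw [← hkey]
      field_simp
    have hTb : (T.card : ℝ) ≤ cU/cL * 4 ^ α * (R/s) ^ α := by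
      have : (T.card : ℝ) * (cL * (s/2) ^ α) ≤ (cU/cL * 4 ^ α * (R/s) ^ α) * (cL * (s/2) ^ α) := by
        rw [hA]; exact hsum
      exact le_of_mul_le_mul_right this hpos
    have hST : (S.ncard : ℝ) = (T.card : ℝ) := by
      rw [hT]
      exact_mod_cast congrArg Nat.cast (Set.ncard_eq_toFinset_card S hSfin)
    rw [hST]
    linarith


/-- **Translation replacement** (Proposition 2.3(b)).  Under volume control there are constants
`C, b > 0` depending only on `α, cL, cU` such that for every `0 < κ < 1` and `R ≥ 1` there are
at most `C·κ^{-α}` coverings by balls of radius `R`, each with finite overlap constant `b`,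
whose concentric balls of radius `κR` together cover `𝕍`. -/
theorem translation_replacement
    {V : Type*} [Countable V] [Infinite V]
    (G : SimpleGraph V) (hconn : G.Connected)
    (α cL cU : ℝ) (hα : 1 ≤ α) (hcL : 0 < cL) (hcU : 0 < cU)
    (hvol : VolCtrl G α cL cU) :
    ∃ C b : ℝ, 0 < C ∧ 0 < b ∧
      ∀ κ : ℝ, 0 < κ → κ < 1 → ∀ R : ℝ, 1 ≤ R →
        ∃ (J : ℕ) (Zs : Fin J → Set V),
          (J : ℝ) ≤ C * κ ^ (-α) ∧
          (∀ j : Fin J, IsCover G (Zs j) R b) ∧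
          ∀ y : V, ∃ j : Fin J, ∃ z ∈ Zs j, y ∈ gball G z (κ * R) := by

  classical
  have hpre := hconn.preconnected
  set Cp : ℝ := cU/cL * 4 ^ α + cU * 2 ^ α with hCp
  have hCppos : 0 < Cp := by positivity
  refine ⟨Cp + 1, Cp, by positivity, hCppos, ?_⟩
  intro κ hκ0 hκ1 R hR
  have hR0 : (0:ℝ) < R := by linarith
  have hα0 : (0:ℝ) ≤ α := by linarith
  obtain ⟨ι, hι⟩ := exists_injective_nat V
  obtain ⟨Z, -, hZsep, hZcov⟩ := exists_max_sep G (s := κ*R) (by positivity) ∅ (by simp)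
  have hκinv : κ ^ (-α) = (κ⁻¹) ^ α := by
    rw [Real.rpow_neg (le_of_lt hκ0), ← Real.inv_rpow (le_of_lt hκ0)]
  have hκα1 : (1:ℝ) ≤ κ ^ (-α) := by
    rw [hκinv]
    apply Real.one_le_rpow _ hα0
    rw [le_inv_comm₀ one_pos hκ0]
    linarith
  set K : ℕ := ⌈Cp * κ ^ (-α)⌉₊ with hKdef
  have hκαpos : (0:ℝ) < κ ^ (-α) := by positivity
  have hK1 : 1 ≤ K := Nat.one_le_iff_ne_zero.2 (by
    simp only [hKdef, ne_eq, Nat.ceil_eq_zero, not_le]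
    positivity)
  have hKle : (K : ℝ) ≤ (Cp + 1) * κ ^ (-α) := by
    calc (K:ℝ) ≤ Cp * κ ^ (-α) + 1 := le_of_lt (Nat.ceil_lt_add_one (by positivity))
      _ ≤ Cp * κ ^ (-α) + κ ^ (-α) := by linarith
      _ = (Cp + 1) * κ ^ (-α) := by ring
  set rel : ℕ → ℕ → Prop := fun n m =>
    ∃ z ∈ Z, ∃ z' ∈ Z, ι z = n ∧ ι z' = m ∧ z ≠ z' ∧ (G.dist z z' : ℝ) ≤ R with hrel
  -- packing bound for Z within R-balls
  have hpack : ∀ z : V, (({z' ∈ Z | (G.dist z z' : ℝ) ≤ R}).ncard : ℝ) ≤ (K : ℝ) := by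
    intro z
    have hp := packing hconn hα hcL hcU hvol (by positivity : (0:ℝ) < κ*R)
      (by nlinarith : κ*R ≤ R) hR hZsep z
    have he : R / (κ*R) = κ⁻¹ := by field_simp
    rw [he, ← hκinv] at hp
    exact le_trans hp (Nat.le_ceil _)
  -- finiteness of the R-neighbourhood sets in Z
  have hfinN : ∀ z : V, ({z' ∈ Z | (G.dist z z' : ℝ) ≤ R}).Finite := by
    intro z
    refine ((gball_finite hcL hvol z hR).subset ?_)
    exact fun w hw => ⟨hpre z w, hw.2⟩
  -- degree bound for coloring
  have hcol : ∀ z ∈ Z, greedyCol rel (ι z) < K := by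
    intro z hz
    apply greedyCol_lt
    set D : Set V := {z' ∈ Z | (G.dist z z' : ℝ) ≤ R} \ {z} with hD
    have hDfin : D.Finite := (hfinN z).diff
    have hzmem : z ∈ {z' ∈ Z | (G.dist z z' : ℝ) ≤ R} := by
      refine ⟨hz, ?_⟩
      simp only [SimpleGraph.dist_self, Nat.cast_zero]
      linarith
    have hDlt : D.ncard < K := by
      have h1 : D.ncard < ({z' ∈ Z | (G.dist z z' : ℝ) ≤ R}).ncard :=
        Set.ncard_diff_singleton_lt_of_mem hzmem (hfinN z)
      have h2 : (({z' ∈ Z | (G.dist z z' : ℝ) ≤ R}).ncard : ℝ) ≤ (K : ℝ) := hpack z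
      have h2' : ({z' ∈ Z | (G.dist z z' : ℝ) ≤ R}).ncard ≤ K := by exact_mod_cast h2
      omega
    refine lt_of_le_of_lt ?_ hDlt
    -- inject the filtered set into D
    set f : ℕ → V := fun m => if h : ∃ z' ∈ Z, ι z' = m then h.choose else z with hf
    have hmem : ∀ m ∈ (Finset.range (ι z)).filter (fun m => rel (ι z) m), f m ∈ D ∧ ι (f m) = m := by
      intro m hm
      rw [Finset.mem_filter] at hm
      obtain ⟨a, haZ, b, hbZ, hai, hbi, hab, hd⟩ := hm.2
      have haz : a = z := hι hai
      subst haz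
      have hex : ∃ z' ∈ Z, ι z' = m := ⟨b, hbZ, hbi⟩
      have hch := hex.choose_spec
      have hfb : f m = b := by
        rw [hf]; simp only [dif_pos hex]
        exact hι (hch.2.trans hbi.symm)
      refine ⟨?_, by rw [hfb]; exact hbi⟩
      rw [hfb]
      exact ⟨⟨hbZ, hd⟩, fun hbz => hab (Set.mem_singleton_iff.1 hbz).symm⟩
    have := Finset.card_le_card_of_injOn f
      (fun m hm => (hDfin.mem_toFinset).2 (hmem m hm).1)
      (fun m hm m' hm' he => by
        rw [← (hmem m hm).2, ← (hmem m' hm').2, he])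
    rw [Set.ncard_eq_toFinset_card D hDfin]
    exact this
  -- color classes
  set W : Fin K → Set V := fun j => {z ∈ Z | greedyCol rel (ι z) = (j : ℕ)} with hW
  have hWsep : ∀ j, (W j).Pairwise fun z z' => R < (G.dist z z' : ℝ) := by
    intro j z hz z' hz' hne
    by_contra hle
    push_neg at hle
    have hιne : ι z ≠ ι z' := fun e => hne (hι e)
    have hcc : greedyCol rel (ι z) = greedyCol rel (ι z') := hz.2.trans hz'.2.symm
    rcases hιne.lt_or_gt with hlt | hlt
    · exact greedyCol_ne rel hlt
        ⟨z', hz'.1, z, hz.1, rfl, rfl, hne.symm, by rwa [SimpleGraph.dist_comm]⟩ hcc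
    · exact greedyCol_ne rel hlt
        ⟨z, hz.1, z', hz'.1, rfl, rfl, hne, hle⟩ hcc.symm
  choose Zs hZsub hZsep' hZcov' using fun j : Fin K =>
    exists_max_sep G (le_of_lt hR0) (W j) (hWsep j)
  refine ⟨K, Zs, hKle, ?_, ?_⟩
  · intro j
    constructor
    · intro y
      obtain ⟨z, hzZ, hzd⟩ := hZcov' j y
      exact ⟨z, hzZ, hpre z y, hzd⟩
    · intro y
      have hset : {z ∈ Zs j | y ∈ gball G z R} = {z ∈ Zs j | (G.dist y z : ℝ) ≤ R} := by
        ext w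
        simp only [Set.mem_setOf_eq, gball]
        rw [SimpleGraph.dist_comm]
        exact and_congr_right fun _ => and_iff_right (hpre w y)
      rw [hset]
      have hp := packing hconn hα hcL hcU hvol hR0 (le_refl R) hR (hZsep' j) y
      rwa [div_self (ne_of_gt hR0), Real.one_rpow, mul_one] at hp
  · intro y
    obtain ⟨z, hzZ, hzd⟩ := hZcov y
    exact ⟨⟨greedyCol rel (ι z), hcol z hzZ⟩, z, hZsub _ ⟨hzZ, rfl⟩, hpre z y, hzd⟩

end LandscapeGraph
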